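/- Let μ be a probability measure on ℝ concentrated on [0,∞) whose mean m = ∫ x dμ(x) is finite and strictly positive, and let r > 0. Then D(μ ‖ Exp(r)) ≥ r·m − 1 − ln(r·m). (Equivalently: among all nonnegative distributions with mean m, the exponential distribution with mean m minimizes the divergence from Exp(r), yielding this value.) -/

import Mathlib

open MeasureTheory Real ProbabilityTheory
open scoped ENNReal NNReal

open scoped Classical in
/-- Kullback-Leibler divergence: the integral of `log (dm/dn)` with respect to `m`
if `m` is absolutely continuous w.r.t. `n` and the log-density is `m`-integrable,
and infinity otherwise. -/
noncomputable def klDiv {α : Type*} [MeasurableSpace α] (μ ν : Measure α) : ℝ≥0∞ :=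
  if μ ≪ ν ∧ Integrable (fun x => log (μ.rnDeriv ν x).toReal) μ then
    ENNReal.ofReal (∫ x, log (μ.rnDeriv ν x).toReal ∂μ)
  else ⊤

/-- Among nonnegative distributions of given finite positive mean `m`, the divergence
from the exponential distribution with rate `r` is at least `r * m - 1 - log (r * m)`;
the minimum is attained by the exponential distribution with mean `m`. -/
theorem klDiv_expMeasure_ge (μ : Measure ℝ) [IsProbabilityMeasure μ]
    (hμ : μ (Set.Iio 0) = 0) (hint : Integrable (fun x : ℝ => x) μ)
    (hm : 0 < ∫ x, x ∂μ) (r : ℝ) (hr : 0 < r) :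
    ENNReal.ofReal (r * (∫ x, x ∂μ) - 1 - Real.log (r * ∫ x, x ∂μ)) ≤
      klDiv μ (expMeasure r) := by
  classical
  set m : ℝ := ∫ x, x ∂μ with hmdef
  by_cases h : μ ≪ expMeasure r ∧
      Integrable (fun x => log (μ.rnDeriv (expMeasure r) x).toReal) μ
  swap
  · rw [klDiv, if_neg h]; exact le_top
  rw [klDiv, if_pos h]
  apply ENNReal.ofReal_le_ofReal
  obtain ⟨hac, hlog⟩ := h
  have hνprob : IsProbabilityMeasure (expMeasure r) := isProbabilityMeasure_expMeasure hr
  set s : ℝ := m⁻¹ with hsdef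
  have hs0 : 0 < s := inv_pos.mpr hm
  have hwd : expMeasure r = volume.withDensity (exponentialPDF r) := rfl
  have hwds : expMeasure s = volume.withDensity (exponentialPDF s) := rfl
  have hpdf_meas : ∀ t : ℝ, Measurable (exponentialPDF t) := by
    intro t
    have : exponentialPDF t = fun x => ENNReal.ofReal (exponentialPDFReal t x) := rfl
    rw [this]
    exact (measurable_exponentialPDFReal t).ennreal_ofReal
  set ρ : ℝ → ℝ≥0∞ := fun x => exponentialPDF s x / exponentialPDF r x with hρdef
  have hρ_meas : Measurable ρ := (hpdf_meas s).div (hpdf_meas r)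
  set f' : ℝ → ℝ≥0∞ := μ.rnDeriv (expMeasure r) with hf'def
  have hf'_meas : Measurable f' := Measure.measurable_rnDeriv μ _
  -- the key lintegral bound
  have hbound : ∫⁻ x, (f' x)⁻¹ * ρ x ∂μ ≤ 1 := by
    have h1 : ∫⁻ x, (f' x)⁻¹ * ρ x ∂μ
        = ∫⁻ x, f' x * ((f' x)⁻¹ * ρ x) ∂(expMeasure r) := by
      nth_rewrite 1 [← Measure.withDensity_rnDeriv_eq μ (expMeasure r) hac]
      rw [lintegral_withDensity_eq_lintegral_mul _ hf'_meas (show Measurable (fun x => (f' x)⁻¹ * ρ x) from hf'_meas.inv.mul hρ_meas)]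
      rfl
    have h2 : ∫⁻ x, f' x * ((f' x)⁻¹ * ρ x) ∂(expMeasure r) ≤ ∫⁻ x, ρ x ∂(expMeasure r) := by
      apply lintegral_mono
      intro x
      calc f' x * ((f' x)⁻¹ * ρ x) = f' x * (f' x)⁻¹ * ρ x := (mul_assoc _ _ _).symm
        _ ≤ 1 * ρ x := mul_le_mul_left (ENNReal.mul_inv_le_one _) _
        _ = ρ x := one_mul _
    have h3 : ∫⁻ x, ρ x ∂(expMeasure r) ≤ 1 := by
      rw [hwd, lintegral_withDensity_eq_lintegral_mul _ (hpdf_meas r) hρ_meas]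
      calc ∫⁻ x, (exponentialPDF r * fun x => ρ x) x ∂volume
          ≤ ∫⁻ x, exponentialPDF s x ∂volume := by
            apply lintegral_mono
            intro x
            exact ENNReal.mul_div_le
        _ = 1 := lintegral_exponentialPDF_eq_one hs0
    rw [h1]; exact le_trans h2 h3
  set u : ℝ → ℝ := fun x => ((f' x)⁻¹ * ρ x).toReal with hudef
  have hu_aemeas : AEMeasurable (fun x => (f' x)⁻¹ * ρ x) μ :=
    (hf'_meas.inv.mul hρ_meas).aemeasurable
  have hu_int : Integrable u μ :=
    integrable_toReal_of_lintegral_ne_top hu_aemeas (lt_of_le_of_lt hbound ENNReal.one_lt_top).ne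
  have hu_integral : ∫ x, u x ∂μ ≤ 1 := by
    have hlt : ∀ᵐ x ∂μ, (f' x)⁻¹ * ρ x < ⊤ :=
      ae_lt_top' hu_aemeas (lt_of_le_of_lt hbound ENNReal.one_lt_top).ne
    rw [hudef]
    rw [integral_toReal hu_aemeas hlt]
    calc (∫⁻ x, (f' x)⁻¹ * ρ x ∂μ).toReal ≤ (1 : ℝ≥0∞).toReal :=
          ENNReal.toReal_mono ENNReal.one_ne_top hbound
      _ = 1 := by simp
  -- pointwise a.e. inequality
  have hx0 : ∀ᵐ x ∂μ, 0 ≤ x := by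
    refine ae_iff.mpr ?_
    rw [show {x : ℝ | ¬ 0 ≤ x} = Set.Iio 0 by ext x; simp [not_le]]
    exact hμ
  have hpos : ∀ᵐ x ∂μ, 0 < f' x := Measure.rnDeriv_pos hac
  have hfin : ∀ᵐ x ∂μ, f' x < ⊤ := hac.ae_le (Measure.rnDeriv_lt_top μ (expMeasure r))
  have hae : ∀ᵐ x ∂μ,
      ((r - s) * x - Real.log (r * m)) + (1 - u x) ≤ log (f' x).toReal := by
    filter_upwards [hx0, hpos, hfin] with x hx hp hf
    set fx : ℝ := (f' x).toReal with hfx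
    have hfx0 : 0 < fx := ENNReal.toReal_pos hp.ne' hf.ne
    have hcden : 0 < r * rexp (-(r * x)) := mul_pos hr (exp_pos _)
    have hcnum : 0 < s * rexp (-(s * x)) := mul_pos hs0 (exp_pos _)
    set c : ℝ := (s * rexp (-(s * x))) / (r * rexp (-(r * x))) with hcdef
    have hc0 : 0 < c := div_pos hcnum hcden
    have hρx : ρ x = ENNReal.ofReal c := by
      rw [hρdef]
      simp only
      rw [exponentialPDF_of_nonneg hx, exponentialPDF_of_nonneg hx,
        ← ENNReal.ofReal_div_of_pos hcden]
    have hux : u x = c / fx := by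
      rw [hudef]
      simp only
      rw [hρx, ENNReal.toReal_mul, ENNReal.toReal_inv, ENNReal.toReal_ofReal hc0.le]
      rw [div_eq_mul_inv, mul_comm]
    have hlogc : Real.log c = (r - s) * x - Real.log (r * m) := by
      rw [hcdef, Real.log_div hcnum.ne' hcden.ne', Real.log_mul hs0.ne' (exp_pos _).ne',
        Real.log_mul hr.ne' (exp_pos _).ne', Real.log_exp, Real.log_exp,
        Real.log_mul hr.ne' hm.ne', hsdef, Real.log_inv]
      ring
    -- log (c / fx) ≤ c / fx - 1
    have hkey : Real.log (c / fx) ≤ c / fx - 1 :=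
      Real.log_le_sub_one_of_pos (div_pos hc0 hfx0)
    rw [Real.log_div hc0.ne' hfx0.ne'] at hkey
    rw [hux, ← hlogc]
    linarith
  -- integrate
  have hg_int : Integrable (fun x => ((r - s) * x - Real.log (r * m)) + (1 - u x)) μ := by
    apply Integrable.add
    · exact (hint.const_mul (r - s)).sub (integrable_const _)
    · exact (integrable_const (1 : ℝ)).sub hu_int
  have hmono := integral_mono_ae hg_int hlog hae
  have hgval : ∫ x, (((r - s) * x - Real.log (r * m)) + (1 - u x)) ∂μ
      = ((r - s) * m - Real.log (r * m)) + (1 - ∫ x, u x ∂μ) := by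
    have hi0 : Integrable (fun x : ℝ => (r - s) * x) μ := hint.const_mul _
    have hA : ∫ x, ((r - s) * x - Real.log (r * m)) ∂μ = (r - s) * m - Real.log (r * m) := by
      rw [integral_sub hi0 (integrable_const _), integral_const_mul, integral_const]
      simp [hmdef]
    have hB : ∫ x, (1 - u x) ∂μ = 1 - ∫ x, u x ∂μ := by
      rw [integral_sub (integrable_const _) hu_int, integral_const]
      simp
    have hi1 : Integrable (fun x => (r - s) * x - Real.log (r * m)) μ :=
      hi0.sub (integrable_const _)
    have hi2 : Integrable (fun x => 1 - u x) μ := (integrable_const _).sub hu_int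
    rw [integral_add hi1 hi2, hA, hB]
  rw [hgval] at hmono
  have hsm : s * m = 1 := inv_mul_cancel₀ hm.ne'
  have : r * m - 1 - Real.log (r * m) ≤ ((r - s) * m - Real.log (r * m)) + (1 - ∫ x, u x ∂μ) := by
    nlinarith [hu_integral]
  exact le_trans this hmono
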